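/- Let T be a densely defined self-adjoint operator with compact resolvent on a Hilbert space H, whose distinct eigenvalues satisfy 0 ≤ λ₁ < … < λ_k < Λ < λ_{k+1} for some Λ > 0. Let V be the direct sum of the eigenspaces ker(T − λ_ν) for ν = 1, …, k. If x ∈ dom(T) with ‖x‖ = 1 satisfies ⟨Tx, x⟩ ≤ Λ + ε, then the distance from x to V satisfies d(V, x)² ≤ (Λ + ε)/λ_{k+1}. -/

import Mathlib

open scoped RealInnerProductSpace
open Filter

/-- If the distinct eigenvalues of a densely defined symmetric operator `T` with complete
system of eigenspaces satisfy `0 ≤ lam 0 < … < lam (k-1) < Λ < lam k` and a unit vector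
`x ∈ dom T` satisfies `⟪T x, x⟫ ≤ Λ + ε`, then the distance from `x` to the sum `V` of the
first `k` eigenspaces satisfies `d(V, x)² ≤ (Λ + ε) / lam k`. -/
theorem dist_to_eigenspaces_sq_le {H : Type*} [NormedAddCommGroup H]
    [InnerProductSpace ℝ H] [CompleteSpace H]
    (D : Submodule ℝ H) (hD : Dense (D : Set H))
    (T : D →ₗ[ℝ] H)
    (hsym : ∀ x y : D, ⟪T x, (y : H)⟫ = ⟪(x : H), T y⟫)
    (lam : ℕ → ℝ) (hmono : StrictMono lam) (hnonneg : 0 ≤ lam 0)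
    (E : ℕ → Submodule ℝ H)
    (hE : ∀ (ν : ℕ) (y : H), y ∈ E ν ↔ ∃ hy : y ∈ D, T ⟨y, hy⟩ = lam ν • y)
    (hcomplete : (⨆ ν, E ν).topologicalClosure = ⊤)
    (k : ℕ) (Λ ε : ℝ) (hΛpos : 0 < Λ)
    (hlt : ∀ ν < k, lam ν < Λ) (hgt : Λ < lam k)
    (x : D) (hx : ‖(x : H)‖ = 1)
    (hray : ⟪T x, (x : H)⟫ ≤ Λ + ε) :
    Metric.infDist (x : H) ((⨆ ν : Fin k, E ν : Submodule ℝ H) : Set H) ^ 2 ≤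
      (Λ + ε) / lam k := by
  classical
  set X : H := (x : H) with hXdef
  -- eigenrelation against elements of E ν and closures
  have hEinner : ∀ (ν : ℕ) (z : D) (y : H), y ∈ E ν → ⟪T z, y⟫ = lam ν * ⟪(z : H), y⟫ := by
    intro ν z y hy
    obtain ⟨hyD, hTy⟩ := (hE ν y).1 hy
    calc ⟪T z, y⟫ = ⟪(z : H), (T ⟨y, hyD⟩ : H)⟫ := hsym z ⟨y, hyD⟩
      _ = ⟪(z : H), lam ν • y⟫ := by rw [hTy]
      _ = lam ν * ⟪(z : H), y⟫ := real_inner_smul_right _ _ _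
  have hFinner : ∀ (ν : ℕ) (z : D) (y : H), y ∈ (E ν).topologicalClosure →
      ⟪T z, y⟫ = lam ν * ⟪(z : H), y⟫ := by
    intro ν z y hy
    have hy' : y ∈ closure (E ν : Set H) := by
      rwa [← Submodule.topologicalClosure_coe]
    have hcl : closure (E ν : Set H) ⊆ {y : H | ⟪T z, y⟫ = lam ν * ⟪(z : H), y⟫} := by
      apply closure_minimal (fun y hy => hEinner ν z y hy)
      exact isClosed_eq (continuous_const.inner continuous_id)
        (continuous_const.mul (continuous_const.inner continuous_id))
    exact hcl hy'
  -- orthogonality of eigenspaces and their closures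
  have hEE : ∀ μ ν : ℕ, μ ≠ ν → ∀ y ∈ E μ, ∀ z ∈ E ν, ⟪y, z⟫ = 0 := by
    intro μ ν hne y hy z hz
    obtain ⟨hyD, hTy⟩ := (hE μ y).1 hy
    have h1 : ⟪T ⟨y, hyD⟩, z⟫ = lam ν * ⟪y, z⟫ := hEinner ν ⟨y, hyD⟩ z hz
    have h2 : ⟪T ⟨y, hyD⟩, z⟫ = lam μ * ⟪y, z⟫ := by
      rw [hTy, real_inner_smul_left]
    have hlam : lam μ ≠ lam ν := fun h => hne (hmono.injective h)
    have h3 : (lam μ - lam ν) * ⟪y, z⟫ = 0 := by linarith [h1, h2, sub_mul (lam μ) (lam ν) ⟪y, z⟫]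
    rcases mul_eq_zero.1 h3 with h | h
    · exact absurd (sub_eq_zero.1 h) hlam
    · exact h
  have hEF : ∀ μ ν : ℕ, μ ≠ ν → ∀ y ∈ E μ, ∀ z ∈ (E ν).topologicalClosure, ⟪y, z⟫ = 0 := by
    intro μ ν hne y hy z hz
    have hz' : z ∈ closure (E ν : Set H) := by rwa [← Submodule.topologicalClosure_coe]
    have hcl : closure (E ν : Set H) ⊆ {z : H | ⟪y, z⟫ = 0} :=
      closure_minimal (fun z hz => hEE μ ν hne y hy z hz)
        (isClosed_eq (continuous_const.inner continuous_id) continuous_const)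
    exact hcl hz'
  have hFF : ∀ μ ν : ℕ, μ ≠ ν → ∀ y ∈ (E μ).topologicalClosure,
      ∀ z ∈ (E ν).topologicalClosure, ⟪y, z⟫ = 0 := by
    intro μ ν hne y hy z hz
    have hy' : y ∈ closure (E μ : Set H) := by rwa [← Submodule.topologicalClosure_coe]
    have hcl : closure (E μ : Set H) ⊆ {y : H | ⟪y, z⟫ = 0} :=
      closure_minimal (fun y hy => hEF μ ν hne y hy z hz)
        (isClosed_eq (continuous_id.inner continuous_const) continuous_const)
    exact hcl hy'
  -- projections
  set xp : ℕ → H := fun ν => (Submodule.orthogonalProjectionOnto (E ν).topologicalClosure X : H) with hxpdef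
  have hxpF : ∀ ν, xp ν ∈ (E ν).topologicalClosure := fun ν => Submodule.coe_mem _
  have hxperp : ∀ ν, ∀ y ∈ (E ν).topologicalClosure, ⟪X - xp ν, y⟫ = 0 := by
    intro ν y hy
    have hm := Submodule.sub_starProjection_mem_orthogonal (K := (E ν).topologicalClosure) X
    rw [real_inner_comm]
    exact (Submodule.mem_orthogonal _ _).1 hm y hy
  have hXxp : ∀ ν, ⟪X, xp ν⟫ = ‖xp ν‖ ^ 2 := by
    intro ν
    have h0 : ⟪X - xp ν, xp ν⟫ = 0 := hxperp ν _ (hxpF ν)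
    rw [inner_sub_left] at h0
    have h1 : ⟪xp ν, xp ν⟫ = ‖xp ν‖ ^ 2 := real_inner_self_eq_norm_sq _
    linarith
  set s : ℕ → H := fun N => ∑ ν ∈ Finset.range N, xp ν with hsdef
  -- orthogonality of the remainder
  have hperp : ∀ N μ, μ < N → ∀ y ∈ (E μ).topologicalClosure, ⟪X - s N, y⟫ = 0 := by
    intro N μ hμ y hy
    have hsum : ∑ ν ∈ Finset.range N, ⟪xp ν, y⟫ = ⟪xp μ, y⟫ :=
      Finset.sum_eq_single_of_mem μ (Finset.mem_range.2 hμ)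
        (fun ν _ hne => hFF ν μ hne _ (hxpF ν) y hy)
    have hXy : ⟪X - xp μ, y⟫ = 0 := hxperp μ y hy
    rw [inner_sub_left] at hXy ⊢
    rw [hsdef]
    simp only [sum_inner, hsum]
    linarith
  have hperpSup : ∀ N y, y ∈ (⨆ ν ∈ Finset.range N, (E ν).topologicalClosure : Submodule ℝ H) →
      ⟪X - s N, y⟫ = 0 := by
    intro N y hy
    have hle : (⨆ ν ∈ Finset.range N, (E ν).topologicalClosure : Submodule ℝ H) ≤
        (ℝ ∙ (X - s N))ᗮ := by
      refine iSup₂_le fun ν hν => fun z hz => ?_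
      refine Submodule.mem_orthogonal_singleton_iff_inner_left.2 ?_
      rw [real_inner_comm]
      exact hperp N ν (Finset.mem_range.1 hν) z hz
    exact Submodule.mem_orthogonal_singleton_iff_inner_right.1 (hle hy)
  have hsmem : ∀ N, s N ∈ (⨆ ν ∈ Finset.range N, (E ν).topologicalClosure : Submodule ℝ H) := by
    intro N
    refine Submodule.sum_mem _ fun ν hν => ?_
    exact (le_iSup₂ (f := fun ν (_ : ν ∈ Finset.range N) => (E ν).topologicalClosure) ν hν)
      (hxpF ν)
  -- best approximation property
  have hbest : ∀ N y, y ∈ (⨆ ν ∈ Finset.range N, (E ν).topologicalClosure : Submodule ℝ H) →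
      ‖X - s N‖ ≤ ‖X - y‖ := by
    intro N y hy
    have hd : ⟪X - s N, s N - y⟫ = 0 := hperpSup N _ (Submodule.sub_mem _ (hsmem N) hy)
    have hXy : X - y = (X - s N) + (s N - y) := by abel
    have hsq : ‖X - y‖ ^ 2 = ‖X - s N‖ ^ 2 + ‖s N - y‖ ^ 2 := by
      rw [hXy, norm_add_sq_real, hd]; ring
    nlinarith [norm_nonneg (X - y), norm_nonneg (X - s N), sq_nonneg (‖s N - y‖)]
  -- convergence s N → X
  have hs_tendsto : Tendsto s atTop (nhds X) := by
    rw [Metric.tendsto_atTop]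
    intro δ hδ
    have hXmem : X ∈ closure ((⨆ ν, E ν : Submodule ℝ H) : Set H) := by
      rw [← Submodule.topologicalClosure_coe, hcomplete]
      exact Submodule.mem_top
    obtain ⟨y, hyE, hyd⟩ := Metric.mem_closure_iff.1 hXmem δ hδ
    obtain ⟨t, hyt⟩ := Submodule.mem_iSup_iff_exists_finset.1 hyE
    refine ⟨(t.sup id) + 1, fun N hN => ?_⟩
    have hyN : y ∈ (⨆ ν ∈ Finset.range N, (E ν).topologicalClosure : Submodule ℝ H) := by
      refine (iSup₂_le fun ν hν => ?_ : (⨆ ν ∈ t, E ν : Submodule ℝ H) ≤ _) hyt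
      have hνN : ν < N := lt_of_lt_of_le (Nat.lt_succ_of_le (Finset.le_sup (f := id) hν)) hN
      exact le_trans (Submodule.le_topologicalClosure _)
        (le_iSup₂ (f := fun ν (_ : ν ∈ Finset.range N) => (E ν).topologicalClosure) ν
          (Finset.mem_range.2 hνN))
    have := hbest N y hyN
    rw [dist_comm, dist_eq_norm]
    calc ‖X - s N‖ ≤ ‖X - y‖ := this
      _ = dist X y := (dist_eq_norm _ _).symm
      _ < δ := hyd
  -- energy identity on partial sums
  have hlamnn : ∀ ν, 0 ≤ lam ν := fun ν => hnonneg.trans (hmono.monotone (Nat.zero_le ν))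
  have hTsum : ∀ N, ⟪T x, s N⟫ = ∑ ν ∈ Finset.range N, lam ν * ‖xp ν‖ ^ 2 := by
    intro N
    rw [hsdef]
    simp only [inner_sum]
    refine Finset.sum_congr rfl fun ν _ => ?_
    rw [hFinner ν x (xp ν) (hxpF ν), ← hXdef, hXxp ν]
  have hA_tendsto : Tendsto (fun N => ∑ ν ∈ Finset.range N, lam ν * ‖xp ν‖ ^ 2) atTop
      (nhds ⟪T x, X⟫) := by
    have h1 : Tendsto (fun N => ⟪T x, s N⟫) atTop (nhds ⟪T x, X⟫) :=
      (tendsto_const_nhds : Tendsto (fun _ : ℕ => T x) atTop _).inner hs_tendsto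
    exact h1.congr hTsum
  have hAmono : Monotone (fun N => ∑ ν ∈ Finset.range N, lam ν * ‖xp ν‖ ^ 2) := by
    intro M N hMN
    refine Finset.sum_le_sum_of_subset_of_nonneg (Finset.range_subset_range.2 hMN) ?_
    intro ν _ _
    exact mul_nonneg (hlamnn ν) (sq_nonneg _)
  have hAle : ∀ N, ∑ ν ∈ Finset.range N, lam ν * ‖xp ν‖ ^ 2 ≤ Λ + ε := fun N =>
    le_trans (hAmono.ge_of_tendsto hA_tendsto N) hray
  -- tail bound
  have hlamk : 0 < lam k := lt_trans hΛpos hgt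
  have htail : ∀ N, ∑ ν ∈ Finset.Ico k N, ‖xp ν‖ ^ 2 ≤ (Λ + ε) / lam k := by
    intro N
    rw [le_div_iff₀ hlamk]
    have h1 : ∑ ν ∈ Finset.Ico k N, lam k * ‖xp ν‖ ^ 2 ≤
        ∑ ν ∈ Finset.Ico k N, lam ν * ‖xp ν‖ ^ 2 :=
      Finset.sum_le_sum fun ν hν =>
        mul_le_mul_of_nonneg_right (hmono.monotone (Finset.mem_Ico.1 hν).1) (sq_nonneg _)
    have h2 : ∑ ν ∈ Finset.Ico k N, lam ν * ‖xp ν‖ ^ 2 ≤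
        ∑ ν ∈ Finset.range N, lam ν * ‖xp ν‖ ^ 2 := by
      refine Finset.sum_le_sum_of_subset_of_nonneg ?_ fun ν _ _ => mul_nonneg (hlamnn ν) (sq_nonneg _)
      intro ν hν
      exact Finset.mem_range.2 (Finset.mem_Ico.1 hν).2
    calc (∑ ν ∈ Finset.Ico k N, ‖xp ν‖ ^ 2) * lam k
        = ∑ ν ∈ Finset.Ico k N, lam k * ‖xp ν‖ ^ 2 := by rw [Finset.sum_mul]; congr 1; ext ν; ring
      _ ≤ Λ + ε := le_trans h1 (le_trans h2 (hAle N))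
  -- distance to V bounded by ‖X - s k‖
  have hd_le : Metric.infDist X ((⨆ ν : Fin k, E ν : Submodule ℝ H) : Set H) ≤ ‖X - s k‖ := by
    have hsk : s k ∈ closure ((⨆ ν : Fin k, E ν : Submodule ℝ H) : Set H) := by
      rw [← Submodule.topologicalClosure_coe]
      refine Submodule.sum_mem _ fun ν hν => ?_
      have hle : (E ν).topologicalClosure ≤ (⨆ ν : Fin k, E ν : Submodule ℝ H).topologicalClosure :=
        Submodule.topologicalClosure_mono
          (le_iSup (fun i : Fin k => E (i : ℕ)) ⟨ν, Finset.mem_range.1 hν⟩)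
      exact hle (hxpF ν)
    calc Metric.infDist X ((⨆ ν : Fin k, E ν : Submodule ℝ H) : Set H)
        = Metric.infDist X (closure ((⨆ ν : Fin k, E ν : Submodule ℝ H) : Set H)) :=
          (Metric.infDist_closure).symm
      _ ≤ dist X (s k) := Metric.infDist_le_dist_of_mem hsk
      _ = ‖X - s k‖ := dist_eq_norm _ _
  -- Pythagoras
  have hpy : ∀ N, k ≤ N → ‖X - s k‖ ^ 2 = ‖X - s N‖ ^ 2 + ∑ ν ∈ Finset.Ico k N, ‖xp ν‖ ^ 2 := by
    intro N hkN
    have hdiff : s N - s k = ∑ ν ∈ Finset.Ico k N, xp ν := by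
      rw [hsdef]
      simp only [Finset.range_eq_Ico]
      rw [← Finset.sum_Ico_consecutive _ (Nat.zero_le k) hkN]
      abel
    have ho : ⟪X - s N, s N - s k⟫ = 0 := by
      rw [hdiff, inner_sum]
      exact Finset.sum_eq_zero fun ν hν =>
        hperp N ν (Finset.mem_Ico.1 hν).2 _ (hxpF ν)
    have hnd : ‖s N - s k‖ ^ 2 = ∑ ν ∈ Finset.Ico k N, ‖xp ν‖ ^ 2 := by
      rw [hdiff, ← real_inner_self_eq_norm_sq, inner_sum]
      refine Finset.sum_congr rfl fun ν hν => ?_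
      rw [sum_inner, Finset.sum_eq_single_of_mem ν hν
        (fun μ _ hne => hFF μ ν hne _ (hxpF μ) _ (hxpF ν)), real_inner_self_eq_norm_sq]
    have hXk : X - s k = (X - s N) + (s N - s k) := by abel
    rw [hXk, norm_add_sq_real, ho, hnd]; ring
  -- conclude
  have hfin : ∀ N, k ≤ N →
      Metric.infDist X ((⨆ ν : Fin k, E ν : Submodule ℝ H) : Set H) ^ 2 ≤
        ‖X - s N‖ ^ 2 + (Λ + ε) / lam k := by
    intro N hkN
    have h1 : Metric.infDist X ((⨆ ν : Fin k, E ν : Submodule ℝ H) : Set H) ^ 2 ≤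
        ‖X - s k‖ ^ 2 := by
      have h0 := Metric.infDist_nonneg (x := X)
        (s := ((⨆ ν : Fin k, E ν : Submodule ℝ H) : Set H))
      nlinarith [hd_le]
    rw [hpy N hkN] at h1
    linarith [htail N]
  have hzero : Tendsto (fun N => ‖X - s N‖ ^ 2 + (Λ + ε) / lam k) atTop
      (nhds (0 + (Λ + ε) / lam k)) := by
    refine Tendsto.add ?_ tendsto_const_nhds
    have h1 : Tendsto (fun N => X - s N) atTop (nhds (X - X)) :=
      tendsto_const_nhds.sub hs_tendsto
    rw [sub_self] at h1
    have h2 := (h1.norm).pow 2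
    simpa using h2
  have := ge_of_tendsto hzero (eventually_atTop.2 ⟨k, hfin⟩)
  linarith
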